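/- Let A be a real symmetric positive semidefinite N×N matrix and let B ⊆ {1, …, N} be a set of indices such that the columns of A indexed by B form a basis of the column space of A. Then the principal submatrix (A_{ij})_{i,j ∈ B} is positive definite; in particular it is invertible. -/

import Mathlib

open Matrix

/-- If `A` is a real symmetric positive semidefinite `N×N` matrix and the
columns of `A` indexed by `B` form a basis of the column space of `A`, then the principal
submatrix `(A_{ij})_{i,j ∈ B}` is positive definite; in particular it is invertible. -/
theorem posDef_principal_submatrix_of_basis (N : ℕ) (A : Matrix (Fin N) (Fin N) ℝ)
    (hA : A.PosSemidef) (B : Finset (Fin N))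
    (hli : LinearIndependent ℝ (fun j : B => Aᵀ (j : Fin N)))
    (hspan : Submodule.span ℝ (Set.range fun j : B => Aᵀ (j : Fin N)) =
      Submodule.span ℝ (Set.range fun j : Fin N => Aᵀ j)) :
    (A.submatrix (fun p : B => (p : Fin N)) (fun p : B => (p : Fin N))).PosDef ∧
      IsUnit (A.submatrix (fun p : B => (p : Fin N)) (fun p : B => (p : Fin N))).det := by
  classical
  have hpd : (A.submatrix (fun p : B => (p : Fin N)) (fun p : B => (p : Fin N))).PosDef := by
    refine Matrix.PosDef.of_dotProduct_mulVec_pos (hA.1.submatrix _) fun x hx => ?_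
    -- extend x by zero
    set v : Fin N → ℝ := fun i => if h : i ∈ B then x ⟨i, h⟩ else 0 with hv
    have hvcoe : ∀ j : B, v (j : Fin N) = x j := fun j => by simp [hv, j.2]
    have hsum : ∀ g : Fin N → ℝ, (∀ j ∉ B, g j = 0) →
        ∑ j, g j = ∑ j : B, g (j : Fin N) := by
      intro g hg
      rw [Finset.sum_coe_sort B (fun j => g j)]
      exact (Finset.sum_subset (Finset.subset_univ B) (fun j _ hj => hg j hj)).symm
    have hdot : star x ⬝ᵥ (A.submatrix (fun p : B => (p : Fin N))
        (fun p : B => (p : Fin N))) *ᵥ x = star v ⬝ᵥ A *ᵥ v := by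
      simp only [dotProduct, mulVec, star_trivial]
      rw [hsum _ (fun j hj => by simp [hv, hj])]
      refine Finset.sum_congr rfl fun i _ => ?_
      rw [hvcoe, hsum _ (fun j hj => by simp [hv, hj])]
      refine congrArg _ (Finset.sum_congr rfl fun j _ => ?_)
      rw [hvcoe, submatrix_apply]
    have hmv : A *ᵥ v = ∑ j : B, x j • Aᵀ (j : Fin N) := by
      funext i
      simp only [mulVec, dotProduct, Finset.sum_apply, Pi.smul_apply, smul_eq_mul,
        transpose_apply]
      rw [hsum _ (fun j hj => by simp [hv, hj])]
      exact Finset.sum_congr rfl fun j _ => by rw [hvcoe, mul_comm]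
    have hnn : 0 ≤ star v ⬝ᵥ A *ᵥ v := hA.dotProduct_mulVec_nonneg v
    rcases lt_or_eq_of_le hnn with h | h
    · rw [hdot]; exact h
    · exfalso
      have h0 : A *ᵥ v = 0 := (hA.dotProduct_mulVec_zero_iff v).mp h.symm
      rw [hmv] at h0
      have := Fintype.linearIndependent_iff.mp hli x h0
      exact hx (funext this)
  exact ⟨hpd, isUnit_iff_ne_zero.mpr hpd.det_pos.ne'⟩
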